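/- Suppose g : E → ℝ → E satisfies the one-sided Lipschitz condition with rate γ̄ : ℝ → ℝ (with respect to ‖·‖_P) on [0, ∞), with γ̄(t) > 0 for all t ≥ 0. Let h > 0, let x* ∈ E satisfy g x* t = 0 for all t ≥ 0, and let y : ℕ → E satisfy the implicit Euler recursion y (k+1) = y k + h • g (y (k+1)) ((k+1)·h) for all k. Then for every k ≥ 1, ‖y k − x*‖_P ≤ (∏_{m=1}^{k} (1 + h·γ̄(m·h))⁻¹) · ‖y 0 − x*‖_P; in particular, if γ̄ is the constant function γ > 0, then ‖y k − x*‖_P ≤ (1 + h·γ)^(−k) · ‖y 0 − x*‖_P. -/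

import Mathlib

open Finset
noncomputable def wip {n : ℕ} (P : Matrix (Fin n) (Fin n) ℝ)
    (u v : EuclideanSpace ℝ (Fin n)) : ℝ :=
  ∑ i, u i * P.mulVec (fun j => v j) i
noncomputable def wnorm {n : ℕ} (P : Matrix (Fin n) (Fin n) ℝ)
    (u : EuclideanSpace ℝ (Fin n)) : ℝ :=
  Real.sqrt (wip P u u)

variable {n : ℕ} (P : Matrix (Fin n) (Fin n) ℝ)

lemma wip_expand (u v : EuclideanSpace ℝ (Fin n)) :
    wip P u v = ∑ i, ∑ j, u i * (P i j * v j) := by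
  simp [wip, Matrix.mulVec, dotProduct, Finset.mul_sum]

lemma wip_add_right (u v w : EuclideanSpace ℝ (Fin n)) :
    wip P u (v + w) = wip P u v + wip P u w := by
  simp [wip_expand, PiLp.add_apply, mul_add, Finset.sum_add_distrib]

lemma wip_sub_right (u v w : EuclideanSpace ℝ (Fin n)) :
    wip P u (v - w) = wip P u v - wip P u w := by
  simp [wip_expand, PiLp.sub_apply, mul_sub, Finset.sum_sub_distrib]

lemma wip_smul_right (c : ℝ) (u v : EuclideanSpace ℝ (Fin n)) :
    wip P u (c • v) = c * wip P u v := by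
  rw [wip_expand, wip_expand, Finset.mul_sum]
  refine Finset.sum_congr rfl fun i _ => ?_
  rw [Finset.mul_sum]
  refine Finset.sum_congr rfl fun j _ => ?_
  rw [PiLp.smul_apply, smul_eq_mul]; ring

lemma wip_comm (hPsymm : P.IsSymm) (u v : EuclideanSpace ℝ (Fin n)) :
    wip P u v = wip P v u := by
  rw [wip_expand, wip_expand, Finset.sum_comm]
  refine Finset.sum_congr rfl fun i _ => Finset.sum_congr rfl fun j _ => ?_
  rw [← hPsymm.apply i j]
  ring

lemma wip_eq_dot (u v : EuclideanSpace ℝ (Fin n)) :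
    wip P u v = dotProduct (fun i => u i) (P.mulVec fun j => v j) := rfl

lemma wip_self_pos (hPpos : P.PosDef) {u : EuclideanSpace ℝ (Fin n)} (hu : u ≠ 0) :
    0 < wip P u u := by
  have h2 := (Matrix.posDef_iff_dotProduct_mulVec.mp hPpos).2 (x := fun i => u i) (by
    intro hc
    apply hu
    ext i
    exact congrFun hc i)
  simpa [wip_eq_dot] using h2

lemma wip_self_nonneg (hPpos : P.PosDef) (u : EuclideanSpace ℝ (Fin n)) :
    0 ≤ wip P u u := by
  by_cases hu : u = 0
  · subst hu
    simp [wip_expand]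
  · exact (wip_self_pos P hPpos hu).le

lemma wnorm_nonneg (u : EuclideanSpace ℝ (Fin n)) : 0 ≤ wnorm P u := Real.sqrt_nonneg _

lemma wnorm_sq (hPpos : P.PosDef) (u : EuclideanSpace ℝ (Fin n)) :
    wnorm P u ^ 2 = wip P u u :=
  Real.sq_sqrt (wip_self_nonneg P hPpos u)

lemma wip_le_wnorm_mul (hPsymm : P.IsSymm) (hPpos : P.PosDef)
    (u v : EuclideanSpace ℝ (Fin n)) :
    wip P u v ≤ wnorm P u * wnorm P v := by
  have hCS : wip P u v ^ 2 ≤ wip P u u * wip P v v := by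
    by_cases hv : v = 0
    · subst hv; simp [wip_expand]
    · have hvv : 0 < wip P v v := wip_self_pos P hPpos hv
      set t : ℝ := wip P u v with ht
      set s : ℝ := wip P v v with hs
      have h1 : ∀ w : EuclideanSpace ℝ (Fin n),
          wip P (s • u - t • v) w = s * wip P w u - t * wip P w v := by
        intro w
        rw [wip_comm P hPsymm, wip_sub_right, wip_smul_right, wip_smul_right]
      have hexp : wip P (s • u - t • v) (s • u - t • v)
          = s * (s * wip P u u - t ^ 2) := by
        rw [wip_sub_right, wip_smul_right, wip_smul_right, h1, h1,
          wip_comm P hPsymm v u, ← ht, ← hs]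
        ring
      have h0 : 0 ≤ wip P (s • u - t • v) (s • u - t • v) := wip_self_nonneg P hPpos _
      rw [hexp] at h0
      nlinarith
  calc wip P u v ≤ |wip P u v| := le_abs_self _
    _ = Real.sqrt (wip P u v ^ 2) := (Real.sqrt_sq_eq_abs _).symm
    _ ≤ Real.sqrt (wip P u u * wip P v v) := Real.sqrt_le_sqrt hCS
    _ = wnorm P u * wnorm P v := by
        rw [Real.sqrt_mul (wip_self_nonneg P hPpos u)]; rfl

theorem stmt_3 {n : ℕ} (P : Matrix (Fin n) (Fin n) ℝ)
    (hPsymm : P.IsSymm) (hPpos : P.PosDef)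
    (g : EuclideanSpace ℝ (Fin n) → ℝ → EuclideanSpace ℝ (Fin n))
    (gam : ℝ → ℝ)
    (hOSL : ∀ x y : EuclideanSpace ℝ (Fin n), ∀ t : ℝ, 0 ≤ t →
      wip P (x - y) (g x t - g y t) ≤ -gam t * (wnorm P (x - y)) ^ 2)
    (hgam : ∀ t : ℝ, 0 ≤ t → 0 < gam t)
    (h : ℝ) (hh : 0 < h)
    (xs : EuclideanSpace ℝ (Fin n)) (hxs : ∀ t : ℝ, 0 ≤ t → g xs t = 0)
    (y : ℕ → EuclideanSpace ℝ (Fin n))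
    (hy : ∀ k : ℕ, y (k + 1) = y k + h • g (y (k + 1)) (((k : ℝ) + 1) * h)) :
    (∀ k : ℕ, 1 ≤ k →
      wnorm P (y k - xs) ≤
        (∏ m ∈ Finset.Icc 1 k, (1 + h * gam ((m : ℝ) * h))⁻¹) * wnorm P (y 0 - xs)) ∧
    (∀ γ : ℝ, 0 < γ → (∀ t : ℝ, gam t = γ) → ∀ k : ℕ, 1 ≤ k →
      wnorm P (y k - xs) ≤ (1 + h * γ) ^ (-(k : ℤ)) * wnorm P (y 0 - xs)) := by
  have step : ∀ k : ℕ, wnorm P (y (k+1) - xs) ≤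
      (1 + h * gam (((k:ℝ)+1)*h))⁻¹ * wnorm P (y k - xs) := by
    intro k
    have ht : (0:ℝ) ≤ ((k:ℝ)+1)*h := by positivity
    have hab : y (k+1) - xs = (y k - xs) +
        h • (g (y (k+1)) (((k:ℝ)+1)*h) - g xs (((k:ℝ)+1)*h)) := by
      rw [hxs _ ht, sub_zero]
      nth_rewrite 1 [hy k]
      rw [add_sub_right_comm]
    have key : wip P (y (k+1) - xs) (y (k+1) - xs)
        = wip P (y (k+1) - xs) (y k - xs)
          + h * wip P (y (k+1) - xs) (g (y (k+1)) (((k:ℝ)+1)*h) - g xs (((k:ℝ)+1)*h)) := by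
      calc wip P (y (k+1) - xs) (y (k+1) - xs)
          = wip P (y (k+1) - xs) ((y k - xs) +
              h • (g (y (k+1)) (((k:ℝ)+1)*h) - g xs (((k:ℝ)+1)*h))) := by rw [← hab]
        _ = _ := by rw [wip_add_right, wip_smul_right]
    have h1 := hOSL (y (k+1)) xs _ ht
    have h2 := wip_le_wnorm_mul P hPsymm hPpos (y (k+1) - xs) (y k - xs)
    have hg := hgam _ ht
    have hA2 := wnorm_sq P hPpos (y (k+1) - xs)
    have hAnn := wnorm_nonneg P (y (k+1) - xs)
    have hBnn := wnorm_nonneg P (y k - xs)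
    set A := wnorm P (y (k+1) - xs) with hA
    set B := wnorm P (y k - xs) with hB
    set γ := gam (((k:ℝ)+1)*h) with hγ
    have hineq : (1 + h*γ) * A^2 ≤ A * B := by
      nlinarith [mul_le_mul_of_nonneg_left h1 hh.le]
    have hpos : 0 < 1 + h * γ := by nlinarith
    rcases eq_or_lt_of_le hAnn with hA0 | hA0
    · rw [← hA0]; positivity
    · have hAB : (1 + h*γ) * A ≤ B := by nlinarith
      calc A = (1 + h*γ)⁻¹ * ((1 + h*γ)*A) := by field_simp
        _ ≤ (1 + h*γ)⁻¹ * B := by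
            exact mul_le_mul_of_nonneg_left hAB (by positivity)
  have part1 : ∀ k : ℕ, 1 ≤ k →
      wnorm P (y k - xs) ≤
        (∏ m ∈ Finset.Icc 1 k, (1 + h * gam ((m : ℝ) * h))⁻¹) * wnorm P (y 0 - xs) := by
    intro k hk
    induction k with
    | zero => omega
    | succ k ih =>
      rcases Nat.lt_or_ge k 1 with h1 | h1
      · have hk0 : k = 0 := by omega
        subst hk0
        simpa using step 0
      · have ih' := ih h1
        have hs := step k
        have ht : (0:ℝ) ≤ ((k:ℝ)+1)*h := by positivity
        have hinv : (0:ℝ) ≤ (1 + h * gam (((k:ℝ)+1)*h))⁻¹ := by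
          have := hgam _ ht
          have : (0:ℝ) < 1 + h * gam (((k:ℝ)+1)*h) := by nlinarith
          positivity
        have hprod : (∏ m ∈ Finset.Icc 1 (k+1), (1 + h * gam ((m:ℝ)*h))⁻¹)
            = (∏ m ∈ Finset.Icc 1 k, (1 + h * gam ((m:ℝ)*h))⁻¹)
              * (1 + h * gam (((k:ℝ)+1)*h))⁻¹ := by
          rw [Finset.prod_Icc_succ_top (by omega)]
          push_cast
          rfl
        rw [hprod]
        calc wnorm P (y (k+1) - xs)
            ≤ (1 + h * gam (((k:ℝ)+1)*h))⁻¹ * wnorm P (y k - xs) := hs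
          _ ≤ (1 + h * gam (((k:ℝ)+1)*h))⁻¹ *
              ((∏ m ∈ Finset.Icc 1 k, (1 + h * gam ((m:ℝ)*h))⁻¹) * wnorm P (y 0 - xs)) :=
              mul_le_mul_of_nonneg_left ih' hinv
          _ = _ := by ring
  refine ⟨part1, ?_⟩
  intro γ hγ hconst k hk
  have hp1 := part1 k hk
  have hp : (∏ m ∈ Finset.Icc 1 k, (1 + h * gam ((m:ℝ)*h))⁻¹) = ((1+h*γ)⁻¹)^k := by
    simp [hconst, Finset.prod_const, Nat.card_Icc]
  have hz : (1+h*γ:ℝ)^(-(k:ℤ)) = ((1+h*γ)⁻¹)^k := by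
    rw [zpow_neg, zpow_natCast, inv_pow]
  rw [hz, ← hp]
  exact hp1
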